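/- For two finite sets of variables x_1,...,x_m and y_1,...,y_n, the product over all i in [m] and j in [n] of (1 + x_i y_j) equals the sum over partitions λ of s_λ(x_1,...,x_m)·s_{λ'}(y_1,...,y_n), where λ' is the conjugate partition. -/

import Mathlib

open scoped Classical

noncomputable section

namespace DualCauchy

open YoungDiagram Finset

/-! ### Basic lemmas on Young diagrams -/

theorem yd_ext {μ ν : YoungDiagram} (h : ∀ i j : ℕ, (i, j) ∈ μ ↔ (i, j) ∈ ν) : μ = ν :=
  SetLike.ext fun ⟨i, j⟩ => h i j

theorem eq_of_rowLen_eq {μ ν : YoungDiagram} (h : ∀ i, μ.rowLen i = ν.rowLen i) : μ = ν :=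
  yd_ext fun i j => by
    rw [YoungDiagram.mem_iff_lt_rowLen, YoungDiagram.mem_iff_lt_rowLen, h]

theorem le_iff_rowLen {μ ν : YoungDiagram} : μ ≤ ν ↔ ∀ i, μ.rowLen i ≤ ν.rowLen i := by
  constructor
  · intro h i
    by_contra hlt
    push_neg at hlt
    have h1 : (i, ν.rowLen i) ∈ μ := YoungDiagram.mem_iff_lt_rowLen.2 hlt
    have h2 := h h1
    rw [YoungDiagram.mem_iff_lt_rowLen] at h2
    omega
  · intro h c hc
    obtain ⟨i, j⟩ := c
    rw [YoungDiagram.mem_iff_lt_rowLen] at hc ⊢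
    exact lt_of_lt_of_le hc (h i)

theorem rowLen_eq_zero_iff {μ : YoungDiagram} {i : ℕ} : μ.rowLen i = 0 ↔ μ.colLen 0 ≤ i := by
  constructor
  · intro h
    by_contra hc
    push_neg at hc
    have h2 := YoungDiagram.mem_iff_lt_rowLen.1 (YoungDiagram.mem_iff_lt_colLen.2 hc)
    omega
  · intro h
    by_contra hc
    have h0 : 0 < μ.rowLen i := Nat.pos_of_ne_zero hc
    have h2 := YoungDiagram.mem_iff_lt_colLen.1 (YoungDiagram.mem_iff_lt_rowLen.2 h0)
    omega

theorem card_eq_sum_rowLen {μ : YoungDiagram} {M : ℕ} (h : μ.colLen 0 ≤ M) :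
    μ.cells.card = ∑ i ∈ Finset.range M, μ.rowLen i := by
  have hcells : μ.cells = (Finset.range M).biUnion (fun i => μ.row i) := by
    ext ⟨i, j⟩
    simp only [Finset.mem_biUnion, Finset.mem_range, YoungDiagram.mem_row_iff,
      YoungDiagram.mem_cells]
    constructor
    · intro hij
      have hi : i < μ.colLen j := YoungDiagram.mem_iff_lt_colLen.1 hij
      exact ⟨i, lt_of_lt_of_le (lt_of_lt_of_le hi (μ.colLen_anti 0 j (Nat.zero_le j))) h,
        hij, rfl⟩
    · rintro ⟨i', _, hmem, rfl⟩
      exact hmem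
  rw [hcells, Finset.card_biUnion]
  · exact Finset.sum_congr rfl fun i _ => (μ.rowLen_eq_card).symm
  · intro a _ b _ hab
    simp only [Finset.disjoint_left, YoungDiagram.mem_row_iff]
    rintro c ⟨_, rfl⟩ ⟨_, h2⟩
    exact hab h2

theorem card_le_of_le {μ ν : YoungDiagram} (h : μ ≤ ν) : μ.cells.card ≤ ν.cells.card :=
  Finset.card_le_card (YoungDiagram.cells_subset_iff.2 h)

/-! ### Transpose lemmas -/

theorem transpose_bot : (⊥ : YoungDiagram).transpose = ⊥ :=
  yd_ext fun i j => by
    simp [YoungDiagram.mem_transpose]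

theorem transpose_eq_bot_iff {μ : YoungDiagram} : μ.transpose = ⊥ ↔ μ = ⊥ := by
  rw [YoungDiagram.transpose_eq_iff_eq_transpose, transpose_bot]

theorem transpose_cells (μ : YoungDiagram) : μ.transpose.cells = μ.cells.image Prod.swap := by
  ext c
  simp only [Finset.mem_image, YoungDiagram.mem_cells, YoungDiagram.mem_transpose]
  constructor
  · intro h
    exact ⟨c.swap, h, Prod.swap_swap c⟩
  · rintro ⟨a, ha, rfl⟩
    simpa using ha

theorem card_transpose (μ : YoungDiagram) : μ.transpose.cells.card = μ.cells.card := by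
  rw [transpose_cells, Finset.card_image_of_injective _ Prod.swap_injective]

/-! ### The constructor `toYD`, boxes and subdiagrams -/

def toYD (s : Finset (ℕ × ℕ)) : YoungDiagram :=
  if h : IsLowerSet (s : Set (ℕ × ℕ)) then ⟨s, h⟩ else ⊥

theorem toYD_cells {s : Finset (ℕ × ℕ)} (h : IsLowerSet (s : Set (ℕ × ℕ))) :
    (toYD s).cells = s := by
  rw [toYD, dif_pos h]

theorem toYD_self (μ : YoungDiagram) : toYD μ.cells = μ := by
  cases μ with
  | mk c h => simp [toYD, h]

def box (M N : ℕ) : Finset YoungDiagram :=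
  ((Finset.range M ×ˢ Finset.range N).powerset.filter
    (fun s : Finset (ℕ × ℕ) => IsLowerSet (↑s : Set (ℕ × ℕ)))).image toYD

theorem mem_box {M N : ℕ} {μ : YoungDiagram} :
    μ ∈ box M N ↔ ∀ c ∈ μ.cells, c.1 < M ∧ c.2 < N := by
  constructor
  · rintro hμ c hc
    rw [box, Finset.mem_image] at hμ
    obtain ⟨s, hs, rfl⟩ := hμ
    rw [Finset.mem_filter, Finset.mem_powerset] at hs
    rw [toYD_cells hs.2] at hc
    have := hs.1 hc
    simpa using Finset.mem_product.1 this
  · intro h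
    rw [box, Finset.mem_image]
    refine ⟨μ.cells, ?_, toYD_self μ⟩
    rw [Finset.mem_filter, Finset.mem_powerset]
    exact ⟨fun c hc => Finset.mem_product.2 (by simpa using h c hc), μ.isLowerSet⟩

theorem mem_box_iff' {M N : ℕ} {μ : YoungDiagram} :
    μ ∈ box M N ↔ μ.colLen 0 ≤ M ∧ μ.rowLen 0 ≤ N := by
  rw [mem_box]
  constructor
  · intro h
    constructor
    · by_contra hc
      push_neg at hc
      have hm : (M, 0) ∈ μ := YoungDiagram.mem_iff_lt_colLen.2 hc
      exact absurd (h _ hm).1 (lt_irrefl M)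
    · by_contra hc
      push_neg at hc
      have hm : (0, N) ∈ μ := YoungDiagram.mem_iff_lt_rowLen.2 hc
      exact absurd (h _ hm).2 (lt_irrefl N)
  · rintro ⟨h1, h2⟩ ⟨i, j⟩ hc
    rw [YoungDiagram.mem_cells] at hc
    have hi : i < μ.colLen j := YoungDiagram.mem_iff_lt_colLen.1 hc
    have hj : j < μ.rowLen i := YoungDiagram.mem_iff_lt_rowLen.1 hc
    exact ⟨lt_of_lt_of_le hi (le_trans (μ.colLen_anti 0 j (Nat.zero_le j)) h1),
      lt_of_lt_of_le hj (le_trans (μ.rowLen_anti 0 i (Nat.zero_le i)) h2)⟩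

theorem mem_box_of_le {M N : ℕ} {μ ν : YoungDiagram} (hν : ν ≤ μ) (hμ : μ ∈ box M N) :
    ν ∈ box M N := by
  rw [mem_box] at hμ ⊢
  intro c hc
  exact hμ c (YoungDiagram.cells_subset_iff.2 hν hc)

theorem box_subset {M N M' N' : ℕ} (hM : M ≤ M') (hN : N ≤ N') : box M N ⊆ box M' N' := by
  intro μ hμ
  rw [mem_box] at hμ ⊢
  intro c hc
  exact ⟨lt_of_lt_of_le (hμ c hc).1 hM, lt_of_lt_of_le (hμ c hc).2 hN⟩

theorem bot_mem_box {M N : ℕ} : (⊥ : YoungDiagram) ∈ box M N := by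
  rw [mem_box]
  intro c hc
  simp at hc

def subDiagrams (μ : YoungDiagram) : Finset YoungDiagram :=
  (μ.cells.powerset.filter (fun s : Finset (ℕ × ℕ) => IsLowerSet (↑s : Set (ℕ × ℕ)))).image toYD

theorem mem_subDiagrams {μ ν : YoungDiagram} : ν ∈ subDiagrams μ ↔ ν ≤ μ := by
  constructor
  · rintro hν
    rw [subDiagrams, Finset.mem_image] at hν
    obtain ⟨s, hs, rfl⟩ := hν
    rw [Finset.mem_filter, Finset.mem_powerset] at hs
    rw [← YoungDiagram.cells_subset_iff, toYD_cells hs.2]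
    exact hs.1
  · intro h
    rw [subDiagrams, Finset.mem_image]
    refine ⟨ν.cells, ?_, toYD_self ν⟩
    rw [Finset.mem_filter, Finset.mem_powerset]
    exact ⟨YoungDiagram.cells_subset_iff.2 h, ν.isLowerSet⟩

theorem subDiagrams_bot : subDiagrams ⊥ = {⊥} := by
  ext ν
  simp [mem_subDiagrams, le_bot_iff]

/-! ### Horizontal and vertical strips -/

def hstrip (ν μ : YoungDiagram) : Prop :=
  ν ≤ μ ∧ ∀ i j : ℕ, (i + 1, j) ∈ μ → (i, j) ∈ ν

def vstrip (ν μ : YoungDiagram) : Prop :=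
  ν ≤ μ ∧ ∀ i j : ℕ, (i, j + 1) ∈ μ → (i, j) ∈ ν

theorem hstrip_iff {ν μ : YoungDiagram} :
    hstrip ν μ ↔ (∀ i, ν.rowLen i ≤ μ.rowLen i) ∧ ∀ i, μ.rowLen (i + 1) ≤ ν.rowLen i := by
  rw [hstrip, le_iff_rowLen]
  apply and_congr Iff.rfl
  constructor
  · intro h i
    by_contra hc
    push_neg at hc
    have h1 : (i + 1, ν.rowLen i) ∈ μ := YoungDiagram.mem_iff_lt_rowLen.2 hc
    have h2 := h i (ν.rowLen i) h1
    rw [YoungDiagram.mem_iff_lt_rowLen] at h2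
    omega
  · intro h i j hj
    rw [YoungDiagram.mem_iff_lt_rowLen] at hj ⊢
    exact lt_of_lt_of_le hj (h i)

theorem vstrip_iff {ν μ : YoungDiagram} :
    vstrip ν μ ↔ (∀ i, ν.rowLen i ≤ μ.rowLen i) ∧ ∀ i, μ.rowLen i ≤ ν.rowLen i + 1 := by
  rw [vstrip, le_iff_rowLen]
  apply and_congr Iff.rfl
  constructor
  · intro h i
    by_contra hc
    push_neg at hc
    have h1 : (i, ν.rowLen i + 1) ∈ μ := YoungDiagram.mem_iff_lt_rowLen.2 hc
    have h2 := h i (ν.rowLen i) h1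
    rw [YoungDiagram.mem_iff_lt_rowLen] at h2
    omega
  · intro h i j hj
    rw [YoungDiagram.mem_iff_lt_rowLen] at hj ⊢
    have := h i
    omega

theorem hstrip_transpose_iff {ν μ : YoungDiagram} :
    hstrip ν.transpose μ.transpose ↔ vstrip ν μ := by
  rw [hstrip, vstrip, YoungDiagram.transpose_le_iff]
  apply and_congr Iff.rfl
  constructor
  · intro h i j hj
    have := h j i (by rwa [YoungDiagram.mem_transpose])
    rwa [YoungDiagram.mem_transpose] at this
  · intro h i j hj
    rw [YoungDiagram.mem_transpose] at hj ⊢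
    exact h j i hj

theorem hstrip_bot_bot : hstrip (⊥ : YoungDiagram) ⊥ :=
  ⟨le_refl _, fun i j h => absurd h (by simp)⟩

theorem hstrip_bot_iff {ν : YoungDiagram} : hstrip ν ⊥ ↔ ν = ⊥ := by
  constructor
  · intro h
    exact le_bot_iff.1 h.1
  · rintro rfl
    exact hstrip_bot_bot

/-! ### `ofRowFn` -/

def ofRowFn (M N : ℕ) (f : ℕ → ℕ) (hf : ∀ i, f (i + 1) ≤ f i) : YoungDiagram where
  cells := (Finset.range M ×ˢ Finset.range N).filter fun c => c.2 < f c.1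
  isLowerSet := by
    have hanti : Antitone f := antitone_nat_of_succ_le hf
    intro a b hba ha
    rw [Prod.le_def] at hba
    simp only [Finset.coe_filter, Set.mem_setOf_eq, Finset.mem_product, Finset.mem_range]
      at ha ⊢
    obtain ⟨⟨h1, h2⟩, h3⟩ := ha
    exact ⟨⟨lt_of_le_of_lt hba.1 h1, lt_of_le_of_lt hba.2 h2⟩,
      lt_of_le_of_lt hba.2 (lt_of_lt_of_le h3 (hanti hba.1))⟩

theorem mem_ofRowFn {M N : ℕ} {f : ℕ → ℕ} {hf : ∀ i, f (i + 1) ≤ f i} {i j : ℕ} :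
    (i, j) ∈ ofRowFn M N f hf ↔ i < M ∧ j < N ∧ j < f i := by
  show (i, j) ∈ YoungDiagram.mk _ _ ↔ _
  change (i, j) ∈ (Finset.range M ×ˢ Finset.range N).filter (fun c => c.2 < f c.1) ↔ _
  rw [Finset.mem_filter, Finset.mem_product]
  simp only [Finset.mem_range]
  tauto

theorem rowLen_eq_of_iff {μ : YoungDiagram} {i k : ℕ} (h : ∀ j, (i, j) ∈ μ ↔ j < k) :
    μ.rowLen i = k := by
  have h1 : ∀ j, j < μ.rowLen i ↔ j < k := fun j =>
    (YoungDiagram.mem_iff_lt_rowLen).symm.trans (h j)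
  have h2 := h1 (μ.rowLen i)
  have h3 := h1 k
  omega

theorem rowLen_ofRowFn {M N : ℕ} {f : ℕ → ℕ} {hf : ∀ i, f (i + 1) ≤ f i}
    (hfN : ∀ i, f i ≤ N) (hfM : ∀ i, M ≤ i → f i = 0) (i : ℕ) :
    (ofRowFn M N f hf).rowLen i = f i := by
  apply rowLen_eq_of_iff
  intro j
  rw [mem_ofRowFn]
  constructor
  · rintro ⟨_, _, h⟩
    exact h
  · intro h
    refine ⟨?_, lt_of_lt_of_le h (hfN i), h⟩
    by_contra hc
    push_neg at hc
    rw [hfM i hc] at h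
    omega

theorem ofRowFn_mem_box {M N : ℕ} {f : ℕ → ℕ} {hf : ∀ i, f (i + 1) ≤ f i} :
    ofRowFn M N f hf ∈ box M N := by
  rw [mem_box]
  rintro ⟨i, j⟩ hc
  rw [YoungDiagram.mem_cells, mem_ofRowFn] at hc
  exact ⟨hc.1, hc.2.1⟩

/-! ### The recursively defined Schur function -/

variable {R : Type*} [CommRing R]

def S (x : ℕ → R) : ℕ → YoungDiagram → R
  | 0, μ => if μ = ⊥ then 1 else 0
  | m + 1, μ => ∑ ν ∈ subDiagrams μ,
      if hstrip ν μ then S x m ν * x m ^ (μ.cells.card - ν.cells.card) else 0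

theorem S_zero (x : ℕ → R) (μ : YoungDiagram) : S x 0 μ = if μ = ⊥ then 1 else 0 := rfl

theorem S_succ (x : ℕ → R) (m : ℕ) (μ : YoungDiagram) :
    S x (m + 1) μ = ∑ ν ∈ subDiagrams μ,
      if hstrip ν μ then S x m ν * x m ^ (μ.cells.card - ν.cells.card) else 0 := rfl

theorem S_bot (x : ℕ → R) : ∀ n, S x n ⊥ = 1
  | 0 => by simp [S_zero]
  | n + 1 => by
    rw [S_succ, subDiagrams_bot, Finset.sum_singleton, if_pos hstrip_bot_bot, S_bot x n]
    simp

theorem S_succ_pad (x : ℕ → R) (m : ℕ) (μ : YoungDiagram) {B : Finset YoungDiagram}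
    (hB : subDiagrams μ ⊆ B) :
    S x (m + 1) μ = ∑ ν ∈ B,
      if hstrip ν μ then S x m ν * x m ^ (μ.cells.card - ν.cells.card) else 0 := by
  rw [S_succ]
  apply Finset.sum_subset hB
  intro ν _ hν
  rw [if_neg]
  intro hst
  exact hν (mem_subDiagrams.2 hst.1)

theorem S_vanish (x : ℕ → R) : ∀ m (μ : YoungDiagram), m < μ.colLen 0 → S x m μ = 0
  | 0, μ, h => by
    rw [S_zero, if_neg]
    rintro rfl
    have h0 : (0, 0) ∈ (⊥ : YoungDiagram) := YoungDiagram.mem_iff_lt_colLen.2 h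
    simpa using h0
  | m + 1, μ, h => by
    rw [S_succ]
    apply Finset.sum_eq_zero
    intro ν _
    split_ifs with hst
    · have h1 : (m + 1, 0) ∈ μ := YoungDiagram.mem_iff_lt_colLen.2 h
      have h2 : (m, 0) ∈ ν := hst.2 m 0 h1
      have h3 : m < ν.colLen 0 := YoungDiagram.mem_iff_lt_colLen.1 h2
      rw [S_vanish x m ν h3, zero_mul]
    · rfl

theorem S_transpose_vanish (y : ℕ → R) (n : ℕ) (μ : YoungDiagram) (h : n < μ.rowLen 0) :
    S y n μ.transpose = 0 := by
  apply S_vanish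
  rwa [YoungDiagram.colLen_transpose]

/-! ### The local (Fomin) growth identity -/

section LocalIdentity

variable {M N : ℕ} {ν ρ : YoungDiagram}

/-- Rows where the bigger diagram `μ` has a binary choice. -/
def Aset (M : ℕ) (ν ρ : YoungDiagram) : Finset ℕ :=
  (Finset.range M).filter fun i =>
    ν.rowLen i ≤ ρ.rowLen i ∧ (i = 0 ∨ ρ.rowLen i < ν.rowLen (i - 1))

/-- Rows where the smaller diagram `σ` has a binary choice. -/
def A'set (M : ℕ) (ν ρ : YoungDiagram) : Finset ℕ :=
  (Finset.range M).filter fun i => ν.rowLen i ≤ ρ.rowLen i ∧ ρ.rowLen (i + 1) < ν.rowLen i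

theorem mem_Aset {i : ℕ} : i ∈ Aset M ν ρ ↔
    i < M ∧ ν.rowLen i ≤ ρ.rowLen i ∧ (i = 0 ∨ ρ.rowLen i < ν.rowLen (i - 1)) := by
  simp [Aset, Finset.mem_filter, and_assoc]

theorem mem_A'set {i : ℕ} : i ∈ A'set M ν ρ ↔
    i < M ∧ ν.rowLen i ≤ ρ.rowLen i ∧ ρ.rowLen (i + 1) < ν.rowLen i := by
  simp [A'set, Finset.mem_filter, and_assoc]

theorem Aset_subset : Aset M ν ρ ⊆ Finset.range M := Finset.filter_subset _ _

theorem A'set_subset : A'set M ν ρ ⊆ Finset.range M := Finset.filter_subset _ _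

def ffn (M : ℕ) (ν ρ : YoungDiagram) (S : Finset ℕ) (i : ℕ) : ℕ :=
  if i ∈ S ∩ Aset M ν ρ then ρ.rowLen i + 1 else max (ν.rowLen i) (ρ.rowLen i)

def gfn (M : ℕ) (ν ρ : YoungDiagram) (S : Finset ℕ) (i : ℕ) : ℕ :=
  if i ∈ S ∩ A'set M ν ρ then ν.rowLen i - 1 else min (ν.rowLen i) (ρ.rowLen i)

section FeasFacts

variable (hν : ν.colLen 0 < M) (hρ : ρ.rowLen 0 < N)
variable (hF1 : ∀ i, ν.rowLen i ≤ ρ.rowLen i + 1)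
variable (hF2 : ∀ i, ρ.rowLen (i + 1) ≤ ν.rowLen i)
variable (hF3 : ν.rowLen 0 ≤ N)

include hν in
theorem haM : ∀ i, M ≤ i → ν.rowLen i = 0 := fun i hi =>
  rowLen_eq_zero_iff.2 (by omega)

include hν hF2 in
theorem hbM : ∀ i, M ≤ i → ρ.rowLen i = 0 := by
  intro i hi
  obtain ⟨M', rfl⟩ : ∃ M', M = M' + 1 := ⟨M - 1, by omega⟩
  have h1 : ν.rowLen M' = 0 := rowLen_eq_zero_iff.2 (by omega)
  have h2 : ρ.rowLen (M' + 1) = 0 := by have := hF2 M'; omega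
  have h3 : ρ.colLen 0 ≤ M' + 1 := rowLen_eq_zero_iff.1 h2
  exact rowLen_eq_zero_iff.2 (by omega)

include hF1 in
theorem ffn_ge_a (S : Finset ℕ) (i : ℕ) : ν.rowLen i ≤ ffn M ν ρ S i := by
  rw [ffn]; split_ifs with h
  · exact hF1 i
  · omega

theorem ffn_ge_b (S : Finset ℕ) (i : ℕ) : ρ.rowLen i ≤ ffn M ν ρ S i := by
  rw [ffn]; split_ifs with h <;> omega

include hF1 in
theorem ffn_le_bsucc (S : Finset ℕ) (i : ℕ) : ffn M ν ρ S i ≤ ρ.rowLen i + 1 := by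
  rw [ffn]; split_ifs with h
  · omega
  · have := hF1 i; omega

include hF2 in
theorem ffn_succ_le_a (S : Finset ℕ) (i : ℕ) : ffn M ν ρ S (i + 1) ≤ ν.rowLen i := by
  rw [ffn]; split_ifs with h
  · have h3 := (mem_Aset.1 (Finset.mem_inter.1 h).2).2.2
    have h4 : ρ.rowLen (i + 1) < ν.rowLen i := by
      rcases h3 with h3 | h3
      · omega
      · simpa using h3
    omega
  · have h5 := ν.rowLen_anti i (i + 1) (by omega)
    have := hF2 i
    omega

include hF1 hF2 in
theorem ffn_anti (S : Finset ℕ) : ∀ i, ffn M ν ρ S (i + 1) ≤ ffn M ν ρ S i := fun i =>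
  le_trans (ffn_succ_le_a hF2 S i) (ffn_ge_a hF1 S i)

include hρ hF3 in
theorem ffn_le_N (S : Finset ℕ) (i : ℕ) : ffn M ν ρ S i ≤ N := by
  have h1 := ν.rowLen_anti 0 i (Nat.zero_le i)
  have h2 := ρ.rowLen_anti 0 i (Nat.zero_le i)
  rw [ffn]; split_ifs with h <;> omega

include hν hF2 in
theorem ffn_zero (S : Finset ℕ) (i : ℕ) (hi : M ≤ i) : ffn M ν ρ S i = 0 := by
  rw [ffn, if_neg]
  · have := haM hν i hi
    have := hbM hν hF2 i hi
    omega
  · intro h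
    have := Finset.mem_range.1 (Aset_subset (Finset.mem_inter.1 h).2)
    omega

theorem gfn_le_a (S : Finset ℕ) (i : ℕ) : gfn M ν ρ S i ≤ ν.rowLen i := by
  rw [gfn]; split_ifs <;> omega

theorem gfn_le_b (S : Finset ℕ) (i : ℕ) : gfn M ν ρ S i ≤ ρ.rowLen i := by
  rw [gfn]; split_ifs with h
  · have := (mem_A'set.1 (Finset.mem_inter.1 h).2).2.1
    omega
  · omega

include hF1 in
theorem gfn_ge_a1 (S : Finset ℕ) (i : ℕ) : ν.rowLen i ≤ gfn M ν ρ S i + 1 := by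
  rw [gfn]; split_ifs with h
  · omega
  · have := hF1 i; omega

include hF2 in
theorem gfn_ge_bsucc (S : Finset ℕ) (i : ℕ) : ρ.rowLen (i + 1) ≤ gfn M ν ρ S i := by
  rw [gfn]; split_ifs with h
  · have := (mem_A'set.1 (Finset.mem_inter.1 h).2).2.2
    omega
  · have := hF2 i
    have := ρ.rowLen_anti i (i + 1) (by omega)
    omega

include hF2 in
theorem gfn_anti (S : Finset ℕ) : ∀ i, gfn M ν ρ S (i + 1) ≤ gfn M ν ρ S i := by
  intro i
  have h1 := gfn_le_a (M := M) (ν := ν) (ρ := ρ) S (i + 1)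
  have h2 := gfn_le_b (M := M) (ν := ν) (ρ := ρ) S (i + 1)
  have h3 := ν.rowLen_anti i (i + 1) (by omega)
  have h4 := ρ.rowLen_anti i (i + 1) (by omega)
  conv_rhs => rw [gfn]
  split_ifs with h
  · have h5 := (mem_A'set.1 (Finset.mem_inter.1 h).2).2.2
    omega
  · omega

include hν hF3 hρ in
theorem gfn_le_N (S : Finset ℕ) (i : ℕ) : gfn M ν ρ S i ≤ N := by
  have h1 := ν.rowLen_anti 0 i (Nat.zero_le i)
  have h2 := ρ.rowLen_anti 0 i (Nat.zero_le i)
  rw [gfn]; split_ifs <;> omega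

include hν in
theorem gfn_zero (S : Finset ℕ) (i : ℕ) (hi : M ≤ i) : gfn M ν ρ S i = 0 := by
  rw [gfn, if_neg]
  · have := haM hν i hi
    omega
  · intro h
    have := Finset.mem_range.1 (A'set_subset (Finset.mem_inter.1 h).2)
    omega

include hν hF2 in
theorem card_Aset : (Aset M ν ρ).card = (A'set M ν ρ).card + 1 := by
  obtain ⟨M', rfl⟩ : ∃ M', M = M' + 1 := ⟨M - 1, by omega⟩
  set e : ℕ → ℕ := fun j => if ρ.rowLen (j + 1) = ν.rowLen j then 1 else 0 with he
  set c : ℕ → ℕ := fun i => if ν.rowLen i ≤ ρ.rowLen i then 1 else 0 with hc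
  have hd : ∀ i, (if (ν.rowLen i ≤ ρ.rowLen i ∧ (i = 0 ∨ ρ.rowLen i < ν.rowLen (i - 1)))
      then (1 : ℕ) else 0) + (if i = 0 then 0 else e (i - 1)) = c i := by
    intro i
    rcases Nat.eq_zero_or_pos i with rfl | hi
    · simp [hc]
    · obtain ⟨i', rfl⟩ : ∃ i', i = i' + 1 := ⟨i - 1, by omega⟩
      have h1 : ρ.rowLen (i' + 1) ≤ ν.rowLen i' := hF2 i'
      have h2 : ν.rowLen (i' + 1) ≤ ν.rowLen i' := ν.rowLen_anti i' (i' + 1) (by omega)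
      simp only [Nat.add_sub_cancel, he, hc]
      rw [if_neg (Nat.succ_ne_zero i')]
      by_cases hab : ν.rowLen (i' + 1) ≤ ρ.rowLen (i' + 1)
      · rcases (by omega : ρ.rowLen (i' + 1) = ν.rowLen i' ∨ ρ.rowLen (i' + 1) < ν.rowLen i')
          with h4 | h4
        · rw [if_neg (by rintro ⟨-, h | h⟩ <;> omega), if_pos h4, if_pos hab]
        · rw [if_pos ⟨hab, Or.inr h4⟩, if_neg (by intro h; omega), if_pos hab]
      · rw [if_neg (by rintro ⟨h, -⟩; exact hab h), if_neg (by intro h; omega), if_neg hab]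
  have hd' : ∀ i, (if (ν.rowLen i ≤ ρ.rowLen i ∧ ρ.rowLen (i + 1) < ν.rowLen i)
      then (1 : ℕ) else 0) + e i = c i := by
    intro i
    have h1 : ρ.rowLen (i + 1) ≤ ν.rowLen i := hF2 i
    have h2 : ρ.rowLen (i + 1) ≤ ρ.rowLen i := ρ.rowLen_anti i (i + 1) (by omega)
    simp only [he, hc]
    by_cases hab : ν.rowLen i ≤ ρ.rowLen i
    · rcases (by omega : ρ.rowLen (i + 1) = ν.rowLen i ∨ ρ.rowLen (i + 1) < ν.rowLen i)
        with h4 | h4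
      · rw [if_neg (by rintro ⟨-, h⟩; omega), if_pos h4, if_pos hab]
      · rw [if_pos ⟨hab, h4⟩, if_neg (by intro h; omega), if_pos hab]
    · rw [if_neg (by rintro ⟨h, -⟩; exact hab h), if_neg (by intro h; omega), if_neg hab]
  have hsumA : (Aset (M' + 1) ν ρ).card
      + ∑ i ∈ Finset.range (M' + 1), (if i = 0 then 0 else e (i - 1))
      = ∑ i ∈ Finset.range (M' + 1), c i := by
    rw [Aset, Finset.card_filter, ← Finset.sum_add_distrib]
    exact Finset.sum_congr rfl fun i _ => hd i
  have hsumA' : (A'set (M' + 1) ν ρ).card + ∑ i ∈ Finset.range (M' + 1), e i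
      = ∑ i ∈ Finset.range (M' + 1), c i := by
    rw [A'set, Finset.card_filter, ← Finset.sum_add_distrib]
    exact Finset.sum_congr rfl fun i _ => hd' i
  have hshift : ∑ i ∈ Finset.range (M' + 1), (if i = 0 then 0 else e (i - 1))
      = ∑ i ∈ Finset.range M', e i := by
    rw [Finset.sum_range_succ' (fun i => if i = 0 then 0 else e (i - 1)) M']
    have h5 : ∀ i : ℕ, (if i + 1 = 0 then 0 else e (i + 1 - 1)) = e i := fun i => by
      rw [if_neg (Nat.succ_ne_zero i), Nat.add_sub_cancel]
    rw [Finset.sum_congr rfl fun i _ => h5 i, if_pos rfl, add_zero]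
  have hlaste : ∑ i ∈ Finset.range (M' + 1), e i = ∑ i ∈ Finset.range M', e i + 1 := by
    rw [Finset.sum_range_succ]
    congr 1
    have h1 : ν.rowLen M' = 0 := rowLen_eq_zero_iff.2 (by omega)
    have h2 : ρ.rowLen (M' + 1) = 0 := hbM hν hF2 (M' + 1) (by omega)
    simp only [he]
    rw [if_pos (by omega)]
  omega

end FeasFacts

end LocalIdentity

section Eval

variable {R : Type*} [CommRing R]
variable {M N : ℕ} {ν ρ : YoungDiagram}

theorem lhs_eval (hν : ν.colLen 0 < M) (hρ : ρ.rowLen 0 < N)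
    (hF1 : ∀ i, ν.rowLen i ≤ ρ.rowLen i + 1) (hF2 : ∀ i, ρ.rowLen (i + 1) ≤ ν.rowLen i)
    (hF3 : ν.rowLen 0 ≤ N) (t u : R) :
    (∑ μ ∈ box M N, if hstrip ν μ ∧ vstrip ρ μ then
        t ^ (μ.cells.card - ν.cells.card) * u ^ (μ.cells.card - ρ.cells.card) else 0)
    = t ^ (∑ i ∈ Finset.range M, (max (ν.rowLen i) (ρ.rowLen i) - ν.rowLen i))
      * u ^ (∑ i ∈ Finset.range M, (max (ν.rowLen i) (ρ.rowLen i) - ρ.rowLen i))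
      * (1 + t * u) ^ (Aset M ν ρ).card := by
  have hρM : ρ.colLen 0 ≤ M := rowLen_eq_zero_iff.1 (hbM hν hF2 M le_rfl)
  have hcardsum : ∀ T : Finset ℕ, T ⊆ Finset.range M →
      (∑ i ∈ Finset.range M, if i ∈ T then (1 : ℕ) else 0) = T.card := by
    intro T hT
    rw [Finset.sum_ite_mem, Finset.inter_eq_right.2 hT]
    simp
  have hrowfn : ∀ S : Finset ℕ, ∀ i,
      (ofRowFn M N (ffn M ν ρ S) (ffn_anti hF1 hF2 S)).rowLen i = ffn M ν ρ S i :=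
    fun S => rowLen_ofRowFn (fun i => ffn_le_N hρ hF3 S i) (fun i hi => ffn_zero hν hF2 S i hi)
  have key : ∀ μ ∈ (box M N).filter (fun μ => hstrip ν μ ∧ vstrip ρ μ), ∀ i,
      μ.rowLen i = max (ν.rowLen i) (ρ.rowLen i)
        + (if i ∈ (Aset M ν ρ).filter (fun k => μ.rowLen k = ρ.rowLen k + 1) then 1 else 0) := by
    intro μ hμ i
    rw [Finset.mem_filter] at hμ
    obtain ⟨hbox, hh, hv⟩ := hμ
    have h1 := (hstrip_iff.1 hh).1 i
    have h2 := (vstrip_iff.1 hv).1 i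
    have h3 := (vstrip_iff.1 hv).2 i
    by_cases hin : i ∈ (Aset M ν ρ).filter (fun k => μ.rowLen k = ρ.rowLen k + 1)
    · rw [if_pos hin]
      have h4 := (Finset.mem_filter.1 hin).2
      have h5 := (mem_Aset.1 (Finset.mem_filter.1 hin).1).2.1
      omega
    · rw [if_neg hin, add_zero]
      by_cases hμi : μ.rowLen i = ρ.rowLen i + 1
      · have hiM : i < M := by
          by_contra hge
          push_neg at hge
          have h6 : μ.colLen 0 ≤ M := (mem_box_iff'.1 hbox).1
          have h7 : μ.rowLen i = 0 := rowLen_eq_zero_iff.2 (by omega)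
          omega
        rcases Nat.lt_or_ge (ρ.rowLen i) (ν.rowLen i) with hab | hab
        · have := hF1 i; omega
        · have hnc : ¬(i = 0 ∨ ρ.rowLen i < ν.rowLen (i - 1)) := by
            intro hor
            exact hin (Finset.mem_filter.2 ⟨mem_Aset.2 ⟨hiM, hab, hor⟩, hμi⟩)
          obtain ⟨i'', rfl⟩ : ∃ i'', i = i'' + 1 := ⟨i - 1, by omega⟩
          have h8 := (hstrip_iff.1 hh).2 i''
          simp only [Nat.add_sub_cancel] at hnc
          omega
      · omega
  rw [← Finset.sum_filter]
  have main : ∑ μ ∈ (box M N).filter (fun μ => hstrip ν μ ∧ vstrip ρ μ),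
        t ^ (μ.cells.card - ν.cells.card) * u ^ (μ.cells.card - ρ.cells.card)
      = ∑ S ∈ (Aset M ν ρ).powerset,
          t ^ ((∑ i ∈ Finset.range M, (max (ν.rowLen i) (ρ.rowLen i) - ν.rowLen i)) + S.card)
          * u ^ ((∑ i ∈ Finset.range M, (max (ν.rowLen i) (ρ.rowLen i) - ρ.rowLen i)) + S.card) := by
    apply Finset.sum_nbij'
      (i := fun μ => (Aset M ν ρ).filter (fun k => μ.rowLen k = ρ.rowLen k + 1))
      (j := fun S => ofRowFn M N (ffn M ν ρ S) (ffn_anti hF1 hF2 S))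
    · intro μ _
      exact Finset.mem_powerset.2 (Finset.filter_subset _ _)
    · intro S hS
      rw [Finset.mem_powerset] at hS
      rw [Finset.mem_filter]
      refine ⟨ofRowFn_mem_box, ?_, ?_⟩
      · rw [hstrip_iff]
        exact ⟨fun i => by rw [hrowfn]; exact ffn_ge_a hF1 S i,
          fun i => by rw [hrowfn]; exact ffn_succ_le_a hF2 S i⟩
      · rw [vstrip_iff]
        exact ⟨fun i => by rw [hrowfn]; exact ffn_ge_b S i,
          fun i => by rw [hrowfn]; exact ffn_le_bsucc hF1 S i⟩
    · intro μ hμ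
      apply eq_of_rowLen_eq
      intro i
      rw [hrowfn]
      have hk := key μ hμ i
      by_cases hin : i ∈ (Aset M ν ρ).filter (fun k => μ.rowLen k = ρ.rowLen k + 1)
      · rw [if_pos hin] at hk
        have hiA : i ∈ Aset M ν ρ := (Finset.mem_filter.1 hin).1
        have hab := (mem_Aset.1 hiA).2.1
        rw [ffn, if_pos (Finset.mem_inter.2 ⟨hin, hiA⟩)]
        omega
      · rw [if_neg hin, add_zero] at hk
        rw [ffn, if_neg (fun hc => hin (Finset.mem_inter.1 hc).1)]
        omega
    · intro S hS
      rw [Finset.mem_powerset] at hS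
      ext k
      rw [Finset.mem_filter]
      constructor
      · rintro ⟨hkA, hk⟩
        rw [hrowfn] at hk
        by_contra hkS
        rw [ffn, if_neg (fun hc => hkS (Finset.mem_inter.1 hc).1)] at hk
        have hab := (mem_Aset.1 hkA).2.1
        omega
      · intro hkS
        have hkA := hS hkS
        refine ⟨hkA, ?_⟩
        rw [hrowfn, ffn, if_pos (Finset.mem_inter.2 ⟨hkS, hkA⟩)]
    · intro μ hμ
      have hbox := (Finset.mem_filter.1 hμ).1
      have hcolM : μ.colLen 0 ≤ M := (mem_box_iff'.1 hbox).1
      have hsub : (Aset M ν ρ).filter (fun k => μ.rowLen k = ρ.rowLen k + 1) ⊆ Finset.range M :=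
        subset_trans (Finset.filter_subset _ _) Aset_subset
      have hμcard : μ.cells.card = (∑ i ∈ Finset.range M, max (ν.rowLen i) (ρ.rowLen i))
          + ((Aset M ν ρ).filter (fun k => μ.rowLen k = ρ.rowLen k + 1)).card := by
        rw [card_eq_sum_rowLen hcolM, Finset.sum_congr rfl (fun i _ => key μ hμ i),
          Finset.sum_add_distrib, hcardsum _ hsub]
      have hνcard : ν.cells.card = ∑ i ∈ Finset.range M, ν.rowLen i :=
        card_eq_sum_rowLen (by omega)
      have hρcard : ρ.cells.card = ∑ i ∈ Finset.range M, ρ.rowLen i := card_eq_sum_rowLen hρM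
      have hmax1 : ∑ i ∈ Finset.range M, max (ν.rowLen i) (ρ.rowLen i)
          = (∑ i ∈ Finset.range M, ν.rowLen i)
            + ∑ i ∈ Finset.range M, (max (ν.rowLen i) (ρ.rowLen i) - ν.rowLen i) := by
        rw [← Finset.sum_add_distrib]
        exact Finset.sum_congr rfl fun i _ => by omega
      have hmax2 : ∑ i ∈ Finset.range M, max (ν.rowLen i) (ρ.rowLen i)
          = (∑ i ∈ Finset.range M, ρ.rowLen i)
            + ∑ i ∈ Finset.range M, (max (ν.rowLen i) (ρ.rowLen i) - ρ.rowLen i) := by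
        rw [← Finset.sum_add_distrib]
        exact Finset.sum_congr rfl fun i _ => by omega
      have e1 : μ.cells.card - ν.cells.card
          = (∑ i ∈ Finset.range M, (max (ν.rowLen i) (ρ.rowLen i) - ν.rowLen i))
            + ((Aset M ν ρ).filter (fun k => μ.rowLen k = ρ.rowLen k + 1)).card := by omega
      have e2 : μ.cells.card - ρ.cells.card
          = (∑ i ∈ Finset.range M, (max (ν.rowLen i) (ρ.rowLen i) - ρ.rowLen i))
            + ((Aset M ν ρ).filter (fun k => μ.rowLen k = ρ.rowLen k + 1)).card := by omega
      rw [e1, e2]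
  rw [main]
  have hstep : ∀ S ∈ (Aset M ν ρ).powerset,
      t ^ ((∑ i ∈ Finset.range M, (max (ν.rowLen i) (ρ.rowLen i) - ν.rowLen i)) + S.card)
        * u ^ ((∑ i ∈ Finset.range M, (max (ν.rowLen i) (ρ.rowLen i) - ρ.rowLen i)) + S.card)
      = (t ^ (∑ i ∈ Finset.range M, (max (ν.rowLen i) (ρ.rowLen i) - ν.rowLen i))
          * u ^ (∑ i ∈ Finset.range M, (max (ν.rowLen i) (ρ.rowLen i) - ρ.rowLen i)))
        * ((∏ _i ∈ S, (t * u)) * ∏ _i ∈ (Aset M ν ρ) \ S, (1 : R)) := by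
    intro S _
    rw [Finset.prod_const, Finset.prod_const, one_pow, mul_one, pow_add, pow_add]
    ring
  rw [Finset.sum_congr rfl hstep, ← Finset.mul_sum, ← Finset.prod_add, Finset.prod_const]
  ring

theorem rhs_eval (hν : ν.colLen 0 < M) (hρ : ρ.rowLen 0 < N)
    (hF1 : ∀ i, ν.rowLen i ≤ ρ.rowLen i + 1) (hF2 : ∀ i, ρ.rowLen (i + 1) ≤ ν.rowLen i)
    (hF3 : ν.rowLen 0 ≤ N) (t u : R) :
    (∑ σ ∈ box M N, if vstrip σ ν ∧ hstrip σ ρ then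
        t ^ (ρ.cells.card - σ.cells.card) * u ^ (ν.cells.card - σ.cells.card) else 0)
    = t ^ (∑ i ∈ Finset.range M, (ρ.rowLen i - min (ν.rowLen i) (ρ.rowLen i)))
      * u ^ (∑ i ∈ Finset.range M, (ν.rowLen i - min (ν.rowLen i) (ρ.rowLen i)))
      * (1 + t * u) ^ (A'set M ν ρ).card := by
  have hρM : ρ.colLen 0 ≤ M := rowLen_eq_zero_iff.1 (hbM hν hF2 M le_rfl)
  have hcardsum : ∀ T : Finset ℕ, T ⊆ Finset.range M →
      (∑ i ∈ Finset.range M, if i ∈ T then (1 : ℕ) else 0) = T.card := by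
    intro T hT
    rw [Finset.sum_ite_mem, Finset.inter_eq_right.2 hT]
    simp
  have hrowfn : ∀ S : Finset ℕ, ∀ i,
      (ofRowFn M N (gfn M ν ρ S) (gfn_anti hF2 S)).rowLen i = gfn M ν ρ S i :=
    fun S => rowLen_ofRowFn (fun i => gfn_le_N hν hρ hF3 S i) (fun i hi => gfn_zero hν S i hi)
  have key : ∀ σ ∈ (box M N).filter (fun σ => vstrip σ ν ∧ hstrip σ ρ), ∀ i,
      σ.rowLen i + (if i ∈ (A'set M ν ρ).filter (fun k => σ.rowLen k < ν.rowLen k) then 1 else 0)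
        = min (ν.rowLen i) (ρ.rowLen i) := by
    intro σ hσ i
    rw [Finset.mem_filter] at hσ
    obtain ⟨hbox, hv, hh⟩ := hσ
    have h1 := (vstrip_iff.1 hv).1 i
    have h2 := (vstrip_iff.1 hv).2 i
    have h3 := (hstrip_iff.1 hh).1 i
    have h4 := (hstrip_iff.1 hh).2 i
    by_cases hin : i ∈ (A'set M ν ρ).filter (fun k => σ.rowLen k < ν.rowLen k)
    · rw [if_pos hin]
      have h5 := (Finset.mem_filter.1 hin).2
      have h6 := (mem_A'set.1 (Finset.mem_filter.1 hin).1).2.1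
      omega
    · rw [if_neg hin, add_zero]
      by_cases hlt : σ.rowLen i < ν.rowLen i
      · have hnA : ¬(i < M ∧ ν.rowLen i ≤ ρ.rowLen i ∧ ρ.rowLen (i + 1) < ν.rowLen i) := by
          intro hA
          exact hin (Finset.mem_filter.2 ⟨mem_A'set.2 hA, hlt⟩)
        have hiM : i < M := by
          by_contra hge
          push_neg at hge
          have h5 : ν.rowLen i = 0 := rowLen_eq_zero_iff.2 (by omega)
          omega
        omega
      · omega
  rw [← Finset.sum_filter]
  have main : ∑ σ ∈ (box M N).filter (fun σ => vstrip σ ν ∧ hstrip σ ρ),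
        t ^ (ρ.cells.card - σ.cells.card) * u ^ (ν.cells.card - σ.cells.card)
      = ∑ S ∈ (A'set M ν ρ).powerset,
          t ^ ((∑ i ∈ Finset.range M, (ρ.rowLen i - min (ν.rowLen i) (ρ.rowLen i))) + S.card)
          * u ^ ((∑ i ∈ Finset.range M, (ν.rowLen i - min (ν.rowLen i) (ρ.rowLen i))) + S.card) := by
    apply Finset.sum_nbij'
      (i := fun σ => (A'set M ν ρ).filter (fun k => σ.rowLen k < ν.rowLen k))
      (j := fun S => ofRowFn M N (gfn M ν ρ S) (gfn_anti hF2 S))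
    · intro σ _
      exact Finset.mem_powerset.2 (Finset.filter_subset _ _)
    · intro S hS
      rw [Finset.mem_powerset] at hS
      rw [Finset.mem_filter]
      refine ⟨ofRowFn_mem_box, ?_, ?_⟩
      · rw [vstrip_iff]
        exact ⟨fun i => by rw [hrowfn]; exact gfn_le_a S i,
          fun i => by rw [hrowfn]; exact gfn_ge_a1 hF1 S i⟩
      · rw [hstrip_iff]
        exact ⟨fun i => by rw [hrowfn]; exact gfn_le_b S i,
          fun i => by rw [hrowfn]; exact gfn_ge_bsucc hF2 S i⟩
    · intro σ hσ
      apply eq_of_rowLen_eq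
      intro i
      rw [hrowfn]
      have hk := key σ hσ i
      by_cases hin : i ∈ (A'set M ν ρ).filter (fun k => σ.rowLen k < ν.rowLen k)
      · rw [if_pos hin] at hk
        have hiA : i ∈ A'set M ν ρ := (Finset.mem_filter.1 hin).1
        have hab := (mem_A'set.1 hiA).2.1
        rw [gfn, if_pos (Finset.mem_inter.2 ⟨hin, hiA⟩)]
        omega
      · rw [if_neg hin, add_zero] at hk
        rw [gfn, if_neg (fun hc => hin (Finset.mem_inter.1 hc).1)]
        omega
    · intro S hS
      rw [Finset.mem_powerset] at hS
      ext k
      rw [Finset.mem_filter]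
      constructor
      · rintro ⟨hkA, hk⟩
        rw [hrowfn] at hk
        by_contra hkS
        rw [gfn, if_neg (fun hc => hkS (Finset.mem_inter.1 hc).1)] at hk
        have hab := (mem_A'set.1 hkA).2.1
        omega
      · intro hkS
        have hkA := hS hkS
        refine ⟨hkA, ?_⟩
        rw [hrowfn, gfn, if_pos (Finset.mem_inter.2 ⟨hkS, hkA⟩)]
        have h5 := (mem_A'set.1 hkA).2.2
        omega
    · intro σ hσ
      have hbox := (Finset.mem_filter.1 hσ).1
      have hcolM : σ.colLen 0 ≤ M := (mem_box_iff'.1 hbox).1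
      have hsub : (A'set M ν ρ).filter (fun k => σ.rowLen k < ν.rowLen k) ⊆ Finset.range M :=
        subset_trans (Finset.filter_subset _ _) A'set_subset
      have hσcard : σ.cells.card
          + ((A'set M ν ρ).filter (fun k => σ.rowLen k < ν.rowLen k)).card
          = ∑ i ∈ Finset.range M, min (ν.rowLen i) (ρ.rowLen i) := by
        rw [card_eq_sum_rowLen hcolM, ← hcardsum _ hsub, ← Finset.sum_add_distrib]
        exact Finset.sum_congr rfl fun i _ => key σ hσ i
      have hνcard : ν.cells.card = ∑ i ∈ Finset.range M, ν.rowLen i :=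
        card_eq_sum_rowLen (by omega)
      have hρcard : ρ.cells.card = ∑ i ∈ Finset.range M, ρ.rowLen i := card_eq_sum_rowLen hρM
      have hmin1 : ∑ i ∈ Finset.range M, ν.rowLen i
          = (∑ i ∈ Finset.range M, min (ν.rowLen i) (ρ.rowLen i))
            + ∑ i ∈ Finset.range M, (ν.rowLen i - min (ν.rowLen i) (ρ.rowLen i)) := by
        rw [← Finset.sum_add_distrib]
        exact Finset.sum_congr rfl fun i _ => by omega
      have hmin2 : ∑ i ∈ Finset.range M, ρ.rowLen i
          = (∑ i ∈ Finset.range M, min (ν.rowLen i) (ρ.rowLen i))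
            + ∑ i ∈ Finset.range M, (ρ.rowLen i - min (ν.rowLen i) (ρ.rowLen i)) := by
        rw [← Finset.sum_add_distrib]
        exact Finset.sum_congr rfl fun i _ => by omega
      have e1 : ρ.cells.card - σ.cells.card
          = (∑ i ∈ Finset.range M, (ρ.rowLen i - min (ν.rowLen i) (ρ.rowLen i)))
            + ((A'set M ν ρ).filter (fun k => σ.rowLen k < ν.rowLen k)).card := by omega
      have e2 : ν.cells.card - σ.cells.card
          = (∑ i ∈ Finset.range M, (ν.rowLen i - min (ν.rowLen i) (ρ.rowLen i)))
            + ((A'set M ν ρ).filter (fun k => σ.rowLen k < ν.rowLen k)).card := by omega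
      rw [e1, e2]
  rw [main]
  have hstep : ∀ S ∈ (A'set M ν ρ).powerset,
      t ^ ((∑ i ∈ Finset.range M, (ρ.rowLen i - min (ν.rowLen i) (ρ.rowLen i))) + S.card)
        * u ^ ((∑ i ∈ Finset.range M, (ν.rowLen i - min (ν.rowLen i) (ρ.rowLen i))) + S.card)
      = (t ^ (∑ i ∈ Finset.range M, (ρ.rowLen i - min (ν.rowLen i) (ρ.rowLen i)))
          * u ^ (∑ i ∈ Finset.range M, (ν.rowLen i - min (ν.rowLen i) (ρ.rowLen i))))
        * ((∏ _i ∈ S, (t * u)) * ∏ _i ∈ (A'set M ν ρ) \ S, (1 : R)) := by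
    intro S _
    rw [Finset.prod_const, Finset.prod_const, one_pow, mul_one, pow_add, pow_add]
    ring
  rw [Finset.sum_congr rfl hstep, ← Finset.mul_sum, ← Finset.prod_add, Finset.prod_const]
  ring

theorem lhs_zero (hnF : ¬((∀ i, ν.rowLen i ≤ ρ.rowLen i + 1)
      ∧ (∀ i, ρ.rowLen (i + 1) ≤ ν.rowLen i) ∧ ν.rowLen 0 ≤ N)) (t u : R) :
    (∑ μ ∈ box M N, if hstrip ν μ ∧ vstrip ρ μ then
        t ^ (μ.cells.card - ν.cells.card) * u ^ (μ.cells.card - ρ.cells.card) else 0) = 0 := by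
  apply Finset.sum_eq_zero
  intro μ hμ
  rw [if_neg]
  rintro ⟨hh, hv⟩
  apply hnF
  refine ⟨fun i => ?_, fun i => ?_, ?_⟩
  · have := (hstrip_iff.1 hh).1 i
    have := (vstrip_iff.1 hv).2 i
    omega
  · have := (vstrip_iff.1 hv).1 (i + 1)
    have := (hstrip_iff.1 hh).2 i
    omega
  · have := (hstrip_iff.1 hh).1 0
    have h2 := (mem_box_iff'.1 hμ).2
    omega

theorem rhs_zero (hρ : ρ.rowLen 0 < N) (hnF : ¬((∀ i, ν.rowLen i ≤ ρ.rowLen i + 1)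
      ∧ (∀ i, ρ.rowLen (i + 1) ≤ ν.rowLen i) ∧ ν.rowLen 0 ≤ N)) (t u : R) :
    (∑ σ ∈ box M N, if vstrip σ ν ∧ hstrip σ ρ then
        t ^ (ρ.cells.card - σ.cells.card) * u ^ (ν.cells.card - σ.cells.card) else 0) = 0 := by
  apply Finset.sum_eq_zero
  intro σ _
  rw [if_neg]
  rintro ⟨hv, hh⟩
  apply hnF
  refine ⟨fun i => ?_, fun i => ?_, ?_⟩
  · have := (vstrip_iff.1 hv).2 i
    have := (hstrip_iff.1 hh).1 i
    omega
  · have := (hstrip_iff.1 hh).2 i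
    have := (vstrip_iff.1 hv).1 i
    omega
  · have := (vstrip_iff.1 hv).2 0
    have := (hstrip_iff.1 hh).1 0
    omega

theorem local_identity (hν : ν.colLen 0 < M) (hρ : ρ.rowLen 0 < N) (t u : R) :
    (∑ μ ∈ box M N, if hstrip ν μ ∧ vstrip ρ μ then
        t ^ (μ.cells.card - ν.cells.card) * u ^ (μ.cells.card - ρ.cells.card) else 0)
    = (1 + t * u) * ∑ σ ∈ box M N, if vstrip σ ν ∧ hstrip σ ρ then
        t ^ (ρ.cells.card - σ.cells.card) * u ^ (ν.cells.card - σ.cells.card) else 0 := by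
  by_cases hF : (∀ i, ν.rowLen i ≤ ρ.rowLen i + 1)
      ∧ (∀ i, ρ.rowLen (i + 1) ≤ ν.rowLen i) ∧ ν.rowLen 0 ≤ N
  · obtain ⟨hF1, hF2, hF3⟩ := hF
    rw [lhs_eval hν hρ hF1 hF2 hF3 t u, rhs_eval hν hρ hF1 hF2 hF3 t u, card_Aset hν hF2]
    have e1 : ∑ i ∈ Finset.range M, (max (ν.rowLen i) (ρ.rowLen i) - ν.rowLen i)
        = ∑ i ∈ Finset.range M, (ρ.rowLen i - min (ν.rowLen i) (ρ.rowLen i)) :=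
      Finset.sum_congr rfl fun i _ => by omega
    have e2 : ∑ i ∈ Finset.range M, (max (ν.rowLen i) (ρ.rowLen i) - ρ.rowLen i)
        = ∑ i ∈ Finset.range M, (ν.rowLen i - min (ν.rowLen i) (ρ.rowLen i)) :=
      Finset.sum_congr rfl fun i _ => by omega
    rw [e1, e2, pow_succ]
    ring
  · rw [lhs_zero hF t u, rhs_zero hρ hF t u]
    ring

end Eval

/-! ### Transpose reindexing and the H-lemma -/

theorem colLen_le_of_le {σ ν : YoungDiagram} (h : σ ≤ ν) (j : ℕ) :
    σ.colLen j ≤ ν.colLen j := by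
  have h2 := le_iff_rowLen.1 (YoungDiagram.transpose_mono h) j
  rwa [YoungDiagram.rowLen_transpose, YoungDiagram.rowLen_transpose] at h2

theorem sum_subDiagrams_transpose {β : Type*} [AddCommMonoid β] (μ : YoungDiagram)
    (F : YoungDiagram → β) :
    ∑ τ ∈ subDiagrams μ.transpose, F τ = ∑ ρ ∈ subDiagrams μ, F ρ.transpose := by
  apply Finset.sum_nbij' (i := fun τ => τ.transpose) (j := fun ρ => ρ.transpose)
  · intro τ hτ
    rw [mem_subDiagrams] at hτ ⊢
    have := YoungDiagram.transpose_mono hτ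
    rwa [YoungDiagram.transpose_transpose] at this
  · intro ρ hρ
    rw [mem_subDiagrams] at hρ ⊢
    exact YoungDiagram.transpose_mono hρ
  · intro τ _
    rw [YoungDiagram.transpose_transpose]
  · intro ρ _
    rw [YoungDiagram.transpose_transpose]
  · intro τ _
    rw [YoungDiagram.transpose_transpose]

theorem S_succ_transpose_pad (y : ℕ → R) (n : ℕ) {B : Finset YoungDiagram} {μ : YoungDiagram}
    (hB : subDiagrams μ ⊆ B) :
    S y (n + 1) μ.transpose = ∑ ρ ∈ B,
      if vstrip ρ μ then S y n ρ.transpose * y n ^ (μ.cells.card - ρ.cells.card) else 0 := by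
  rw [S_succ, sum_subDiagrams_transpose]
  have hcong : ∀ ρ ∈ subDiagrams μ,
      (if hstrip ρ.transpose μ.transpose then
        S y n ρ.transpose * y n ^ (μ.transpose.cells.card - ρ.transpose.cells.card) else 0)
      = (if vstrip ρ μ then S y n ρ.transpose * y n ^ (μ.cells.card - ρ.cells.card) else 0) := by
    intro ρ _
    rw [hstrip_transpose_iff, card_transpose, card_transpose]
  rw [Finset.sum_congr rfl hcong]
  apply Finset.sum_subset hB
  intro ρ _ hρ
  rw [if_neg (fun hc => hρ (mem_subDiagrams.2 hc.1))]

theorem H_lemma (y : ℕ → R) (t : R) :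
    ∀ n M N : ℕ, ∀ ν : YoungDiagram, ν.colLen 0 < M → n ≤ N →
    (∑ μ ∈ box M N, if hstrip ν μ then
        t ^ (μ.cells.card - ν.cells.card) * S y n μ.transpose else 0)
    = (∏ j ∈ Finset.range n, (1 + t * y j)) * S y n ν.transpose := by
  intro n
  induction n with
  | zero =>
    intro M N ν hν hnN
    rw [Finset.prod_range_zero, one_mul]
    rw [Finset.sum_eq_single (⊥ : YoungDiagram)]
    · by_cases hν0 : ν = ⊥
      · subst hν0
        rw [if_pos hstrip_bot_bot]
        simp [transpose_bot, S_bot]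
      · rw [if_neg (fun h => hν0 (hstrip_bot_iff.1 h)), eq_comm, S_zero,
          if_neg (fun hb => hν0 (transpose_eq_bot_iff.1 hb))]
    · intro μ _ hne
      by_cases h : hstrip ν μ
      · rw [if_pos h, S_zero, if_neg (fun hb => hne (transpose_eq_bot_iff.1 hb)), mul_zero]
      · rw [if_neg h]
    · intro habs
      exact absurd bot_mem_box habs
  | succ n ih =>
    intro M N ν hν hnN
    have hcomb : ∀ μ ∈ box M N,
        (if hstrip ν μ then t ^ (μ.cells.card - ν.cells.card) * S y (n + 1) μ.transpose else 0)
        = ∑ ρ ∈ box M N,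
            (if hstrip ν μ ∧ vstrip ρ μ then
              t ^ (μ.cells.card - ν.cells.card) * y n ^ (μ.cells.card - ρ.cells.card) else 0)
            * S y n ρ.transpose := by
      intro μ hμ
      by_cases h : hstrip ν μ
      · rw [if_pos h,
          S_succ_transpose_pad y n (fun ρ hρ => mem_box_of_le (mem_subDiagrams.1 hρ) hμ),
          Finset.mul_sum]
        apply Finset.sum_congr rfl
        intro ρ _
        by_cases h2 : vstrip ρ μ
        · rw [if_pos h2, if_pos ⟨h, h2⟩]
          ring
        · rw [if_neg h2, if_neg (fun hc => h2 hc.2), mul_zero, zero_mul]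
      · rw [if_neg h, eq_comm]
        apply Finset.sum_eq_zero
        intro ρ _
        rw [if_neg (fun hc => h hc.1), zero_mul]
    calc
      (∑ μ ∈ box M N, if hstrip ν μ then
          t ^ (μ.cells.card - ν.cells.card) * S y (n + 1) μ.transpose else 0)
        = ∑ μ ∈ box M N, ∑ ρ ∈ box M N,
            (if hstrip ν μ ∧ vstrip ρ μ then
              t ^ (μ.cells.card - ν.cells.card) * y n ^ (μ.cells.card - ρ.cells.card) else 0)
            * S y n ρ.transpose := Finset.sum_congr rfl hcomb
      _ = ∑ ρ ∈ box M N, ∑ μ ∈ box M N,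
            (if hstrip ν μ ∧ vstrip ρ μ then
              t ^ (μ.cells.card - ν.cells.card) * y n ^ (μ.cells.card - ρ.cells.card) else 0)
            * S y n ρ.transpose := Finset.sum_comm
      _ = ∑ ρ ∈ box M N,
            (∑ μ ∈ box M N, if hstrip ν μ ∧ vstrip ρ μ then
              t ^ (μ.cells.card - ν.cells.card) * y n ^ (μ.cells.card - ρ.cells.card) else 0)
            * S y n ρ.transpose := by
          apply Finset.sum_congr rfl
          intro ρ _
          rw [Finset.sum_mul]
      _ = ∑ ρ ∈ box M n,
            (∑ μ ∈ box M N, if hstrip ν μ ∧ vstrip ρ μ then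
              t ^ (μ.cells.card - ν.cells.card) * y n ^ (μ.cells.card - ρ.cells.card) else 0)
            * S y n ρ.transpose := by
          symm
          apply Finset.sum_subset (box_subset le_rfl (by omega))
          intro ρ hρ hρ2
          have h5 := mem_box_iff'.1 hρ
          have h6 : ¬(ρ.colLen 0 ≤ M ∧ ρ.rowLen 0 ≤ n) := fun hc => hρ2 (mem_box_iff'.2 hc)
          have h7 : n < ρ.rowLen 0 := by omega
          rw [S_transpose_vanish y n ρ h7, mul_zero]
      _ = ∑ ρ ∈ box M n,
            ((1 + t * y n) * ∑ σ ∈ box M N, if vstrip σ ν ∧ hstrip σ ρ then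
              t ^ (ρ.cells.card - σ.cells.card) * y n ^ (ν.cells.card - σ.cells.card) else 0)
            * S y n ρ.transpose := by
          apply Finset.sum_congr rfl
          intro ρ hρ
          have h5 := (mem_box_iff'.1 hρ).2
          have hρ' : ρ.rowLen 0 < N := by omega
          rw [local_identity hν hρ' t (y n)]
      _ = (1 + t * y n) * ∑ ρ ∈ box M n, ∑ σ ∈ box M N,
            (if vstrip σ ν ∧ hstrip σ ρ then
              t ^ (ρ.cells.card - σ.cells.card) * y n ^ (ν.cells.card - σ.cells.card) else 0)
            * S y n ρ.transpose := by
          rw [Finset.mul_sum]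
          apply Finset.sum_congr rfl
          intro ρ _
          rw [mul_assoc, Finset.sum_mul]
      _ = (1 + t * y n) * ∑ σ ∈ box M N, ∑ ρ ∈ box M n,
            (if vstrip σ ν ∧ hstrip σ ρ then
              t ^ (ρ.cells.card - σ.cells.card) * y n ^ (ν.cells.card - σ.cells.card) else 0)
            * S y n ρ.transpose := by
          congr 1
          exact Finset.sum_comm
      _ = (1 + t * y n) * ∑ σ ∈ box M N,
            (if vstrip σ ν then y n ^ (ν.cells.card - σ.cells.card)
              * (∑ ρ ∈ box M n, if hstrip σ ρ then
                  t ^ (ρ.cells.card - σ.cells.card) * S y n ρ.transpose else 0) else 0) := by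
          congr 1
          apply Finset.sum_congr rfl
          intro σ _
          by_cases h : vstrip σ ν
          · rw [if_pos h, Finset.mul_sum]
            apply Finset.sum_congr rfl
            intro ρ _
            by_cases h2 : hstrip σ ρ
            · rw [if_pos h2, if_pos ⟨h, h2⟩]
              ring
            · rw [if_neg h2, if_neg (fun hc => h2 hc.2), zero_mul, mul_zero]
          · rw [if_neg h]
            apply Finset.sum_eq_zero
            intro ρ _
            rw [if_neg (fun hc => h hc.1), zero_mul]
      _ = (1 + t * y n) * ∑ σ ∈ box M N,
            (if vstrip σ ν then y n ^ (ν.cells.card - σ.cells.card)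
              * ((∏ j ∈ Finset.range n, (1 + t * y j)) * S y n σ.transpose) else 0) := by
          congr 1
          apply Finset.sum_congr rfl
          intro σ _
          by_cases h : vstrip σ ν
          · rw [if_pos h, if_pos h]
            congr 1
            exact ih M n σ (lt_of_le_of_lt (colLen_le_of_le h.1 0) hν) le_rfl
          · rw [if_neg h, if_neg h]
      _ = (1 + t * y n) * ((∏ j ∈ Finset.range n, (1 + t * y j))
            * ∑ σ ∈ box M N, (if vstrip σ ν then
                S y n σ.transpose * y n ^ (ν.cells.card - σ.cells.card) else 0)) := by
          congr 1
          rw [Finset.mul_sum]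
          apply Finset.sum_congr rfl
          intro σ _
          split_ifs <;> ring
      _ = (1 + t * y n) * ((∏ j ∈ Finset.range n, (1 + t * y j))
            * ∑ σ ∈ box M N ∪ subDiagrams ν, (if vstrip σ ν then
                S y n σ.transpose * y n ^ (ν.cells.card - σ.cells.card) else 0)) := by
          congr 2
          apply Finset.sum_subset Finset.subset_union_left
          intro σ hσ hσ2
          by_cases h : vstrip σ ν
          · rw [if_pos h]
            have h5 : σ.colLen 0 ≤ ν.colLen 0 := colLen_le_of_le h.1 0
            have h6 : ¬(σ.colLen 0 ≤ M ∧ σ.rowLen 0 ≤ N) := fun hc => hσ2 (mem_box_iff'.2 hc)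
            have h7 : n < σ.rowLen 0 := by omega
            rw [S_transpose_vanish y n σ h7, zero_mul]
          · rw [if_neg h]
      _ = (1 + t * y n) * ((∏ j ∈ Finset.range n, (1 + t * y j)) * S y (n + 1) ν.transpose) := by
          congr 2
          exact (S_succ_transpose_pad y n Finset.subset_union_right).symm
      _ = (∏ j ∈ Finset.range (n + 1), (1 + t * y j)) * S y (n + 1) ν.transpose := by
          rw [Finset.prod_range_succ]
          ring

/-! ### The main identity for `S` -/

theorem S_main (x y : ℕ → R) : ∀ m n : ℕ,
    (∏ i ∈ Finset.range m, ∏ j ∈ Finset.range n, (1 + x i * y j))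
    = ∑ μ ∈ box m n, S x m μ * S y n μ.transpose := by
  intro m
  induction m with
  | zero =>
    intro n
    rw [Finset.prod_range_zero, eq_comm, Finset.sum_eq_single (⊥ : YoungDiagram)]
    · simp [transpose_bot, S_bot]
    · intro μ _ hne
      rw [S_zero, if_neg hne, zero_mul]
    · intro habs
      exact absurd bot_mem_box habs
  | succ m ih =>
    intro n
    have hstep : ∀ μ ∈ box (m + 1) n,
        S x (m + 1) μ * S y n μ.transpose
        = ∑ ν ∈ box (m + 1) n, (if hstrip ν μ then
            S x m ν * (x m ^ (μ.cells.card - ν.cells.card) * S y n μ.transpose) else 0) := by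
      intro μ hμ
      rw [S_succ_pad x m μ (fun ν hν => mem_box_of_le (mem_subDiagrams.1 hν) hμ),
        Finset.sum_mul]
      apply Finset.sum_congr rfl
      intro ν _
      split_ifs with h
      · ring
      · rw [zero_mul]
    calc
      (∏ i ∈ Finset.range (m + 1), ∏ j ∈ Finset.range n, (1 + x i * y j))
        = (∏ i ∈ Finset.range m, ∏ j ∈ Finset.range n, (1 + x i * y j))
          * ∏ j ∈ Finset.range n, (1 + x m * y j) := Finset.prod_range_succ _ _
      _ = (∑ μ ∈ box m n, S x m μ * S y n μ.transpose)
          * ∏ j ∈ Finset.range n, (1 + x m * y j) := by rw [ih n]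
      _ = ∑ ν ∈ box m n, S x m ν * ((∏ j ∈ Finset.range n, (1 + x m * y j))
            * S y n ν.transpose) := by
          rw [Finset.sum_mul]
          apply Finset.sum_congr rfl
          intro ν _
          ring
      _ = ∑ ν ∈ box (m + 1) n, S x m ν * ((∏ j ∈ Finset.range n, (1 + x m * y j))
            * S y n ν.transpose) := by
          apply Finset.sum_subset (box_subset (by omega) le_rfl)
          intro ν hν hν2
          have h5 := mem_box_iff'.1 hν
          have h6 : ¬(ν.colLen 0 ≤ m ∧ ν.rowLen 0 ≤ n) := fun hc => hν2 (mem_box_iff'.2 hc)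
          rw [S_vanish x m ν (by omega), zero_mul]
      _ = ∑ ν ∈ box (m + 1) n, S x m ν * (∑ μ ∈ box (m + 1) n, if hstrip ν μ then
            x m ^ (μ.cells.card - ν.cells.card) * S y n μ.transpose else 0) := by
          apply Finset.sum_congr rfl
          intro ν hν
          by_cases hc : ν.colLen 0 ≤ m
          · rw [H_lemma y (x m) n (m + 1) n ν (by omega) le_rfl]
          · rw [S_vanish x m ν (by omega), zero_mul, zero_mul]
      _ = ∑ ν ∈ box (m + 1) n, ∑ μ ∈ box (m + 1) n, (if hstrip ν μ then
            S x m ν * (x m ^ (μ.cells.card - ν.cells.card) * S y n μ.transpose) else 0) := by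
          apply Finset.sum_congr rfl
          intro ν _
          rw [Finset.mul_sum]
          apply Finset.sum_congr rfl
          intro μ _
          split_ifs with h
          · rfl
          · rw [mul_zero]
      _ = ∑ μ ∈ box (m + 1) n, ∑ ν ∈ box (m + 1) n, (if hstrip ν μ then
            S x m ν * (x m ^ (μ.cells.card - ν.cells.card) * S y n μ.transpose) else 0) :=
          Finset.sum_comm
      _ = ∑ μ ∈ box (m + 1) n, S x (m + 1) μ * S y n μ.transpose :=
          (Finset.sum_congr rfl hstep).symm

/-! ### Bounded tableaux and the branching rule -/

theorem mem_of_le {ν μ : YoungDiagram} (h : ν ≤ μ) {c : ℕ × ℕ} (hc : c ∈ ν) : c ∈ μ :=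
  (YoungDiagram.mem_cells _).1 (YoungDiagram.cells_subset_iff.2 h ((YoungDiagram.mem_cells _).2 hc))

theorem bddTabs_finite (m : ℕ) (μ : YoungDiagram) :
    {T : SemistandardYoungTableau μ | ∀ c ∈ μ.cells, T c.1 c.2 < m}.Finite := by
  have hfin : Finite {T : SemistandardYoungTableau μ | ∀ c ∈ μ.cells, T c.1 c.2 < m} := by
    apply Finite.of_injective
      (f := fun T : {T : SemistandardYoungTableau μ | ∀ c ∈ μ.cells, T c.1 c.2 < m} =>
        (fun c : μ.cells =>
          (⟨(T : SemistandardYoungTableau μ) c.1.1 c.1.2, T.2 c.1 c.2⟩ : Fin m)))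
    intro T1 T2 h
    apply Subtype.ext
    apply SemistandardYoungTableau.ext
    intro i j
    by_cases hc : (i, j) ∈ μ.cells
    · have := congrFun h ⟨(i, j), hc⟩
      exact congrArg Fin.val this
    · rw [(T1 : SemistandardYoungTableau μ).zeros (fun hm => hc ((YoungDiagram.mem_cells _).2 hm)),
        (T2 : SemistandardYoungTableau μ).zeros (fun hm => hc ((YoungDiagram.mem_cells _).2 hm))]
  exact Set.toFinite _

def bTabs (m : ℕ) (μ : YoungDiagram) : Finset (SemistandardYoungTableau μ) :=
  (bddTabs_finite m μ).toFinset

theorem mem_bTabs {m : ℕ} {μ : YoungDiagram} {T : SemistandardYoungTableau μ} :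
    T ∈ bTabs m μ ↔ ∀ c ∈ μ.cells, T c.1 c.2 < m :=
  (bddTabs_finite m μ).mem_toFinset

/-- The subdiagram of cells with entry `< m`. -/
def restrictYD (μ : YoungDiagram) (m : ℕ) (T : SemistandardYoungTableau μ) : YoungDiagram where
  cells := μ.cells.filter fun c => T c.1 c.2 < m
  isLowerSet := by
    intro a b hba ha
    simp only [Finset.coe_filter, Set.mem_setOf_eq] at ha ⊢
    obtain ⟨h1, h2⟩ := ha
    rw [Prod.le_def] at hba
    have h1' : (a.1, a.2) ∈ μ := (YoungDiagram.mem_cells _).1 (by rwa [Prod.mk.eta])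
    have hbμ : (b.1, b.2) ∈ μ := μ.up_left_mem hba.1 hba.2 h1'
    refine ⟨by rwa [← Prod.mk.eta (p := b), YoungDiagram.mem_cells] , ?_⟩
    have e1 : T b.1 b.2 ≤ T a.1 b.2 :=
      T.col_weak hba.1 (μ.up_left_mem le_rfl hba.2 h1')
    have e2 : T a.1 b.2 ≤ T a.1 a.2 := T.row_weak_of_le hba.2 h1'
    omega

theorem mem_restrictYD {μ : YoungDiagram} {m : ℕ} {T : SemistandardYoungTableau μ} {i j : ℕ} :
    (i, j) ∈ restrictYD μ m T ↔ (i, j) ∈ μ ∧ T i j < m := by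
  show (i, j) ∈ YoungDiagram.mk _ _ ↔ _
  change (i, j) ∈ μ.cells.filter (fun c => T c.1 c.2 < m) ↔ _
  rw [Finset.mem_filter, YoungDiagram.mem_cells]

theorem restrictYD_le {μ : YoungDiagram} {m : ℕ} {T : SemistandardYoungTableau μ} :
    restrictYD μ m T ≤ μ := by
  rw [← YoungDiagram.cells_subset_iff]
  exact Finset.filter_subset _ _

/-- The restriction of a tableau to the subdiagram of entries `< m`. -/
def restrictT (μ : YoungDiagram) (m : ℕ) (T : SemistandardYoungTableau μ) :
    SemistandardYoungTableau (restrictYD μ m T) where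
  entry i j := if (i, j) ∈ restrictYD μ m T then T i j else 0
  row_weak' := by
    intro i j1 j2 hj h2
    have h1 : (i, j1) ∈ restrictYD μ m T :=
      (restrictYD μ m T).up_left_mem le_rfl (le_of_lt hj) h2
    show (if (i, j1) ∈ restrictYD μ m T then T i j1 else 0)
      ≤ (if (i, j2) ∈ restrictYD μ m T then T i j2 else 0)
    rw [if_pos h1, if_pos h2]
    exact T.row_weak hj (mem_restrictYD.1 h2).1
  col_strict' := by
    intro i1 i2 j hi h2
    have h1 : (i1, j) ∈ restrictYD μ m T :=
      (restrictYD μ m T).up_left_mem (le_of_lt hi) le_rfl h2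
    show (if (i1, j) ∈ restrictYD μ m T then T i1 j else 0)
      < (if (i2, j) ∈ restrictYD μ m T then T i2 j else 0)
    rw [if_pos h1, if_pos h2]
    exact T.col_strict hi (mem_restrictYD.1 h2).1
  zeros' := fun h => if_neg h

theorem restrictT_mem {μ : YoungDiagram} {m : ℕ} {T : SemistandardYoungTableau μ} :
    restrictT μ m T ∈ bTabs m (restrictYD μ m T) := by
  rw [mem_bTabs]
  intro c hc
  rw [YoungDiagram.mem_cells] at hc
  show (if (c.1, c.2) ∈ restrictYD μ m T then T c.1 c.2 else 0) < m
  rw [Prod.mk.eta, if_pos hc]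
  exact ((mem_restrictYD (i := c.1) (j := c.2)).1 (by rwa [Prod.mk.eta])).2

theorem hstrip_restrictYD {μ : YoungDiagram} {m : ℕ} {T : SemistandardYoungTableau μ}
    (hT : T ∈ bTabs (m + 1) μ) : hstrip (restrictYD μ m T) μ := by
  refine ⟨restrictYD_le, ?_⟩
  intro i j hij
  have h1 : (i, j) ∈ μ := μ.up_left_mem (by omega) le_rfl hij
  have h2 : T i j < T (i + 1) j := T.col_strict (by omega) hij
  have h3 : T (i + 1) j < m + 1 := mem_bTabs.1 hT (i + 1, j) ((YoungDiagram.mem_cells _).2 hij)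
  exact mem_restrictYD.2 ⟨h1, by omega⟩

/-- Extend a tableau on `ν` to one on `μ` by filling the strip `μ \ ν` with entry `m`. -/
def extendT {ν μ : YoungDiagram} (m : ℕ) (hst : hstrip ν μ) (T : SemistandardYoungTableau ν)
    (hT : ∀ c ∈ ν.cells, T c.1 c.2 < m) : SemistandardYoungTableau μ where
  entry i j := if (i, j) ∈ ν then T i j else if (i, j) ∈ μ then m else 0
  row_weak' := by
    intro i j1 j2 hj hμ
    show (if (i, j1) ∈ ν then T i j1 else if (i, j1) ∈ μ then m else 0)
      ≤ (if (i, j2) ∈ ν then T i j2 else if (i, j2) ∈ μ then m else 0)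
    by_cases h2 : (i, j2) ∈ ν
    · rw [if_pos (ν.up_left_mem le_rfl (le_of_lt hj) h2), if_pos h2]
      exact T.row_weak hj h2
    · rw [if_neg h2, if_pos hμ]
      by_cases h1 : (i, j1) ∈ ν
      · rw [if_pos h1]
        exact le_of_lt (hT (i, j1) ((YoungDiagram.mem_cells _).2 h1))
      · rw [if_neg h1, if_pos (μ.up_left_mem le_rfl (le_of_lt hj) hμ)]
  col_strict' := by
    intro i1 i2 j hi hμ
    show (if (i1, j) ∈ ν then T i1 j else if (i1, j) ∈ μ then m else 0)
      < (if (i2, j) ∈ ν then T i2 j else if (i2, j) ∈ μ then m else 0)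
    by_cases h2 : (i2, j) ∈ ν
    · rw [if_pos (ν.up_left_mem (le_of_lt hi) le_rfl h2), if_pos h2]
      exact T.col_strict hi h2
    · rw [if_neg h2, if_pos hμ]
      have h1ν : (i1, j) ∈ ν := hst.2 i1 j (μ.up_left_mem (by omega) le_rfl hμ)
      rw [if_pos h1ν]
      exact hT (i1, j) ((YoungDiagram.mem_cells _).2 h1ν)
  zeros' := by
    intro i j hij
    show (if (i, j) ∈ ν then T i j else if (i, j) ∈ μ then m else 0) = 0
    rw [if_neg (fun h => hij (mem_of_le hst.1 h)), if_neg hij]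

noncomputable def extendFull (m : ℕ) (μ : YoungDiagram)
    (p : Σ ν : YoungDiagram, SemistandardYoungTableau ν) : SemistandardYoungTableau μ :=
  if h : hstrip p.1 μ ∧ ∀ c ∈ p.1.cells, p.2 c.1 c.2 < m then extendT m h.1 p.2 h.2
  else default

theorem sigma_ssyt_ext {a c : YoungDiagram} (b : SemistandardYoungTableau a)
    (d : SemistandardYoungTableau c) (h : a = c) (h2 : ∀ i j, b i j = d i j) :
    (⟨a, b⟩ : Σ ν : YoungDiagram, SemistandardYoungTableau ν) = ⟨c, d⟩ := by
  subst h
  exact congrArg _ (SemistandardYoungTableau.ext h2)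

theorem branching (x : ℕ → R) (m : ℕ) (μ : YoungDiagram) :
    (∑ T ∈ bTabs (m + 1) μ, ∏ c ∈ μ.cells, x (T c.1 c.2))
    = ∑ ν ∈ subDiagrams μ, if hstrip ν μ then
        (∑ T ∈ bTabs m ν, ∏ c ∈ ν.cells, x (T c.1 c.2)) * x m ^ (μ.cells.card - ν.cells.card)
      else 0 := by
  rw [← Finset.sum_filter]
  have h1 : ∀ ν ∈ (subDiagrams μ).filter (fun ν => hstrip ν μ),
      (∑ T ∈ bTabs m ν, ∏ c ∈ ν.cells, x (T c.1 c.2)) * x m ^ (μ.cells.card - ν.cells.card)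
      = ∑ T ∈ bTabs m ν, (∏ c ∈ ν.cells, x (T c.1 c.2)) * x m ^ (μ.cells.card - ν.cells.card) :=
    fun ν _ => Finset.sum_mul _ _ _
  rw [Finset.sum_congr rfl h1, Finset.sum_sigma']
  symm
  apply Finset.sum_nbij'
    (i := fun p => extendFull m μ p)
    (j := fun T => (⟨restrictYD μ m T, restrictT μ m T⟩ :
      Σ ν : YoungDiagram, SemistandardYoungTableau ν))
  · intro p hp
    rw [Finset.mem_sigma] at hp
    obtain ⟨hp1, hp2⟩ := hp
    rw [Finset.mem_filter] at hp1
    have hcond : hstrip p.1 μ ∧ ∀ c ∈ p.1.cells, p.2 c.1 c.2 < m :=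
      ⟨hp1.2, fun c hc => mem_bTabs.1 hp2 c hc⟩
    rw [mem_bTabs]
    intro c _
    rw [extendFull, dif_pos hcond]
    show (if (c.1, c.2) ∈ p.1 then p.2 c.1 c.2 else if (c.1, c.2) ∈ μ then m else 0) < m + 1
    by_cases h : (c.1, c.2) ∈ p.1
    · rw [if_pos h]
      have h9 : p.2 c.1 c.2 < m := hcond.2 (c.1, c.2) ((YoungDiagram.mem_cells _).2 h)
      omega
    · rw [if_neg h]
      split_ifs <;> omega
  · intro T hT
    rw [Finset.mem_sigma]
    constructor
    · rw [Finset.mem_filter]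
      exact ⟨mem_subDiagrams.2 restrictYD_le, hstrip_restrictYD hT⟩
    · exact restrictT_mem
  · intro p hp
    rw [Finset.mem_sigma] at hp
    obtain ⟨hp1, hp2⟩ := hp
    rw [Finset.mem_filter] at hp1
    have hcond : hstrip p.1 μ ∧ ∀ c ∈ p.1.cells, p.2 c.1 c.2 < m :=
      ⟨hp1.2, fun c hc => mem_bTabs.1 hp2 c hc⟩
    obtain ⟨ν, T'⟩ := p
    have hent : ∀ i j : ℕ, extendFull m μ ⟨ν, T'⟩ i j
        = (if (i, j) ∈ ν then T' i j else if (i, j) ∈ μ then m else 0) := by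
      intro i j
      rw [extendFull, dif_pos hcond]
      rfl
    have hY : restrictYD μ m (extendFull m μ ⟨ν, T'⟩) = ν := by
      apply yd_ext
      intro i j
      rw [mem_restrictYD, hent]
      constructor
      · rintro ⟨h1, h2⟩
        by_contra h3
        rw [if_neg h3, if_pos h1] at h2
        omega
      · intro h
        have h1 : (i, j) ∈ μ := mem_of_le hcond.1.1 h
        rw [if_pos h]
        exact ⟨h1, hcond.2 (i, j) ((YoungDiagram.mem_cells _).2 h)⟩
    apply sigma_ssyt_ext _ _ hY
    intro i j
    show (if (i, j) ∈ restrictYD μ m (extendFull m μ ⟨ν, T'⟩) then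
      extendFull m μ ⟨ν, T'⟩ i j else 0) = T' i j
    rw [hY, hent]
    by_cases h : (i, j) ∈ ν
    · rw [if_pos h, if_pos h]
    · rw [if_neg h, T'.zeros h]
  · intro T hT
    have hcond : hstrip (restrictYD μ m T) μ ∧
        ∀ c ∈ (restrictYD μ m T).cells, (restrictT μ m T) c.1 c.2 < m :=
      ⟨hstrip_restrictYD hT, fun c hc => mem_bTabs.1 restrictT_mem c hc⟩
    apply SemistandardYoungTableau.ext
    intro i j
    rw [extendFull, dif_pos hcond]
    show (if (i, j) ∈ restrictYD μ m T then (restrictT μ m T) i j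
      else if (i, j) ∈ μ then m else 0) = T i j
    by_cases h : (i, j) ∈ restrictYD μ m T
    · rw [if_pos h]
      show (if (i, j) ∈ restrictYD μ m T then T i j else 0) = T i j
      rw [if_pos h]
    · rw [if_neg h]
      by_cases h2 : (i, j) ∈ μ
      · rw [if_pos h2]
        have h3 : ¬ T i j < m := fun hc => h (mem_restrictYD.2 ⟨h2, hc⟩)
        have h4 : T i j < m + 1 := mem_bTabs.1 hT (i, j) ((YoungDiagram.mem_cells _).2 h2)
        omega
      · rw [if_neg h2, T.zeros h2]
  · intro p hp
    rw [Finset.mem_sigma] at hp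
    obtain ⟨hp1, hp2⟩ := hp
    rw [Finset.mem_filter] at hp1
    have hcond : hstrip p.1 μ ∧ ∀ c ∈ p.1.cells, p.2 c.1 c.2 < m :=
      ⟨hp1.2, fun c hc => mem_bTabs.1 hp2 c hc⟩
    obtain ⟨ν, T'⟩ := p
    have hent : ∀ i j : ℕ, extendFull m μ ⟨ν, T'⟩ i j
        = (if (i, j) ∈ ν then T' i j else if (i, j) ∈ μ then m else 0) := by
      intro i j
      rw [extendFull, dif_pos hcond]
      rfl
    have hsub : ν.cells ⊆ μ.cells := YoungDiagram.cells_subset_iff.2 hcond.1.1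
    show (∏ c ∈ ν.cells, x (T' c.1 c.2)) * x m ^ (μ.cells.card - ν.cells.card)
      = ∏ c ∈ μ.cells, x (extendFull m μ ⟨ν, T'⟩ c.1 c.2)
    rw [← Finset.prod_sdiff hsub]
    have he1 : ∀ c ∈ μ.cells \ ν.cells, x (extendFull m μ ⟨ν, T'⟩ c.1 c.2) = x m := by
      intro c hc
      rw [Finset.mem_sdiff] at hc
      obtain ⟨hc1, hc2⟩ := hc
      rw [hent]
      rw [if_neg (fun h => hc2 ((YoungDiagram.mem_cells _).2 h)),
        if_pos ((YoungDiagram.mem_cells _).1 (by rwa [Prod.mk.eta]))]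
    have he2 : ∀ c ∈ ν.cells, x (extendFull m μ ⟨ν, T'⟩ c.1 c.2) = x (T' c.1 c.2) := by
      intro c hc
      rw [hent, if_pos ((YoungDiagram.mem_cells _).1 (by rwa [Prod.mk.eta]))]
    rw [Finset.prod_congr rfl he1, Finset.prod_congr rfl he2, Finset.prod_const,
      Finset.card_sdiff_of_subset hsub, mul_comm]

theorem sum_bTabs_eq_S (x : ℕ → R) : ∀ (m : ℕ) (μ : YoungDiagram),
    (∑ T ∈ bTabs m μ, ∏ c ∈ μ.cells, x (T c.1 c.2)) = S x m μ := by
  intro m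
  induction m with
  | zero =>
    intro μ
    by_cases hμ : μ = ⊥
    · subst hμ
      have hcard : (bTabs 0 (⊥ : YoungDiagram)) = {default} := by
        apply Finset.eq_singleton_iff_unique_mem.2
        constructor
        · rw [mem_bTabs]
          intro c hc
          rw [YoungDiagram.cells_bot] at hc
          exact absurd hc (Finset.notMem_empty c)
        · intro T _
          apply SemistandardYoungTableau.ext
          intro i j
          rw [T.zeros (by simp), (default : SemistandardYoungTableau (⊥ : YoungDiagram)).zeros
            (by simp)]
      rw [hcard, Finset.sum_singleton, YoungDiagram.cells_bot, Finset.prod_empty, S_bot]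
    · have hempty : bTabs 0 μ = ∅ := by
        apply Finset.eq_empty_of_forall_notMem
        intro T hT
        have h00 : (0, 0) ∈ μ := by
          by_contra h0
          apply hμ
          apply yd_ext
          intro i j
          simp only [YoungDiagram.notMem_bot, iff_false]
          intro hij
          exact h0 (μ.up_left_mem (Nat.zero_le i) (Nat.zero_le j) hij)
        have := mem_bTabs.1 hT (0, 0) ((YoungDiagram.mem_cells _).2 h00)
        omega
      rw [hempty, Finset.sum_empty, S_zero, if_neg hμ]
  | succ m ih =>
    intro μ
    rw [branching, S_succ]
    apply Finset.sum_congr rfl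
    intro ν _
    by_cases h : hstrip ν μ
    · rw [if_pos h, if_pos h, ih ν]
    · rw [if_neg h, if_neg h]

end DualCauchy

end


open Classical in
/-- The Schur polynomial `s_μ(x_0, …, x_{m-1})`, defined as the generating function
of semistandard Young tableaux of shape `μ` with entries in `{0, …, m-1}`. -/
noncomputable def schurSsyt {R : Type*} [CommRing R] (m : ℕ) (μ : YoungDiagram)
    (x : ℕ → R) : R :=
  ∑ᶠ T : SemistandardYoungTableau μ,
    if ∀ c ∈ μ.cells, T c.1 c.2 < m then ∏ c ∈ μ.cells, x (T c.1 c.2) else 0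

namespace DualCauchy

variable {R : Type*} [CommRing R]

theorem schurSsyt_eq_S (x : ℕ → R) (m : ℕ) (μ : YoungDiagram) :
    schurSsyt m μ x = S x m μ := by
  rw [← sum_bTabs_eq_S x m μ]
  unfold schurSsyt
  have hsupp : (Function.support fun T : SemistandardYoungTableau μ =>
      if ∀ c ∈ μ.cells, T c.1 c.2 < m then ∏ c ∈ μ.cells, x (T c.1 c.2) else 0)
      ⊆ ↑(bTabs m μ) := by
    intro T hT
    rw [Function.mem_support] at hT
    rw [Finset.mem_coe, mem_bTabs]
    by_contra h
    exact hT (if_neg h)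
  rw [finsum_eq_finset_sum_of_support_subset _ hsupp]
  exact Finset.sum_congr rfl fun T hT => if_pos (mem_bTabs.1 hT)

end DualCauchy

/-- The dual Cauchy identity for Schur polynomials in finitely many variables:
`∏_{i<m, j<n} (1 + x_i y_j) = Σ_λ s_λ(x) s_{λ'}(y)`. -/
theorem dual_cauchy_identity_schur {R : Type*} [CommRing R] (m n : ℕ) (x y : ℕ → R) :
    ∏ i ∈ Finset.range m, ∏ j ∈ Finset.range n, (1 + x i * y j)
      = ∑ᶠ μ : YoungDiagram, schurSsyt m μ x * schurSsyt n μ.transpose y := by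
  have hconv : ∀ μ ∈ DualCauchy.box m n, schurSsyt m μ x * schurSsyt n μ.transpose y
      = DualCauchy.S x m μ * DualCauchy.S y n μ.transpose := fun μ _ => by
    rw [DualCauchy.schurSsyt_eq_S, DualCauchy.schurSsyt_eq_S]
  have hsupp : (Function.support fun μ : YoungDiagram =>
      schurSsyt m μ x * schurSsyt n μ.transpose y) ⊆ ↑(DualCauchy.box m n) := by
    intro μ hμ
    rw [Function.mem_support] at hμ
    rw [Finset.mem_coe, DualCauchy.mem_box_iff']
    constructor
    · by_contra hc
      push_neg at hc
      rw [DualCauchy.schurSsyt_eq_S x m μ, DualCauchy.S_vanish x m μ hc, zero_mul] at hμ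
      exact hμ rfl
    · by_contra hc
      push_neg at hc
      rw [DualCauchy.schurSsyt_eq_S y n μ.transpose,
        DualCauchy.S_transpose_vanish y n μ hc, mul_zero] at hμ
      exact hμ rfl
  rw [finsum_eq_finset_sum_of_support_subset _ hsupp, Finset.sum_congr rfl hconv]
  exact DualCauchy.S_main x y m n
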